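/- arXiv:2212.05049 — 5 statements merged into one kernel-verified Lean document; each statement's English description precedes it below -/
import Mathlib

section
/- Let K ⊂ ℂⁿ be a convex body (compact convex set with nonempty interior). Then K is complex symmetric (i.e., there exists x₀ ∈ ℂⁿ such that ξ·(K − x₀) = K − x₀ for every unit complex number ξ) if and only if for every unit complex number ξ, the set ξ·K is a translate of K. -/
open Pointwise MeasureTheory

/-- Scalar multiplication by a unit complex number as a real-linear isometry equivalence. -/
noncomputable def smulIsomAux {E : Type*} [NormedAddCommGroup E] [NormedSpace ℂ E]
    (ξ : ℂ) (hξ : ‖ξ‖ = 1) : E ≃ₗᵢ[ℝ] E where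
  toLinearEquiv :=
  { toFun := fun x => ξ • x
    invFun := fun x => ξ⁻¹ • x
    map_add' := smul_add ξ
    map_smul' := fun r x => smul_comm ξ r x
    left_inv := fun x => by
      show ξ⁻¹ • ξ • x = x
      rw [smul_smul, inv_mul_cancel₀ (by intro h0; simp [h0] at hξ), one_smul]
    right_inv := fun x => by
      show ξ • ξ⁻¹ • x = x
      rw [smul_smul, mul_inv_cancel₀ (by intro h0; simp [h0] at hξ), one_smul] }
  norm_map' := fun x => by simp [norm_smul, hξ]

/-- A convex body `K ⊂ ℂⁿ` is complex symmetric (there is `x₀` with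
`ξ • (K - x₀) = K - x₀` for all unit `ξ`) iff for every unit complex number `ξ`,
`ξ • K` is a translate of `K`. -/
theorem complex_symmetric_iff_smul_translate (n : ℕ)
    (K : Set (EuclideanSpace ℂ (Fin n)))
    (hKc : IsCompact K) (hKconv : Convex ℝ K) (hKint : (interior K).Nonempty) :
    (∃ x₀ : EuclideanSpace ℂ (Fin n), ∀ ξ : ℂ, ‖ξ‖ = 1 →
        ξ • ((fun x => x - x₀) '' K) = (fun x => x - x₀) '' K) ↔
    (∀ ξ : ℂ, ‖ξ‖ = 1 → ∃ v : EuclideanSpace ℂ (Fin n),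
        ξ • K = (fun x => x + v) '' K) := by
  constructor
  · rintro ⟨x₀, hx₀⟩ ξ hξ
    refine ⟨ξ • x₀ - x₀, ?_⟩
    have h1 : ξ • K = (fun y => y + ξ • x₀) '' (ξ • ((fun x => x - x₀) '' K)) := by
      rw [← Set.image_smul, ← Set.image_smul, Set.image_image, Set.image_image]
      have hf : (fun x : EuclideanSpace ℂ (Fin n) => ξ • (x - x₀) + ξ • x₀)
          = fun x => ξ • x := by
        funext x; rw [smul_sub, sub_add_cancel]
      rw [hf]
    rw [h1, hx₀ ξ hξ, Set.image_image]
    have hf : (fun x : EuclideanSpace ℂ (Fin n) => x - x₀ + ξ • x₀)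
        = fun x => x + (ξ • x₀ - x₀) := by
      funext x; abel
    rw [hf]
  · intro h
    borelize (EuclideanSpace ℂ (Fin n))
    letI : MeasureSpace (EuclideanSpace ℂ (Fin n)) := measureSpaceOfInnerProductSpace
    set c : ℝ := (volume K).toReal with hc
    have hcpos : 0 < c :=
      ENNReal.toReal_pos
        (MeasureTheory.Measure.measure_pos_of_nonempty_interior _ hKint).ne'
        hKc.measure_lt_top.ne
    set I : EuclideanSpace ℂ (Fin n) := ∫ x in K, x with hI
    set x₀ : EuclideanSpace ℂ (Fin n) := c⁻¹ • I with hx₀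
    refine ⟨x₀, ?_⟩
    intro ξ hξ
    obtain ⟨v, hv⟩ := h ξ hξ
    have hint : IntegrableOn (fun x => x) K volume :=
      ContinuousOn.integrableOn_compact hKc continuousOn_id
    -- (a): ∫ over ξ • K equals ξ • I
    have hemb : MeasurableEmbedding (fun x : EuclideanSpace ℂ (Fin n) => ξ • x) := by
      exact (smulIsomAux (E := EuclideanSpace ℂ (Fin n)) ξ hξ).toMeasurableEquiv.measurableEmbedding
    have hmp : MeasurePreserving (fun x : EuclideanSpace ℂ (Fin n) => ξ • x) volume volume := by
      exact (smulIsomAux (E := EuclideanSpace ℂ (Fin n)) ξ hξ).measurePreserving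
    have ha : (∫ x in ξ • K, x) = ξ • I := by
      rw [← Set.image_smul, hmp.setIntegral_image_emb hemb, integral_smul]
    -- (b): ∫ over translate equals I + c • v
    have hb : (∫ x in (fun x => x + v) '' K, x) = I + c • v := by
      have hmp' : MeasurePreserving (fun x : EuclideanSpace ℂ (Fin n) => x + v)
          volume volume := measurePreserving_add_right volume v
      have hemb' : MeasurableEmbedding (fun x : EuclideanSpace ℂ (Fin n) => x + v) :=
        (MeasurableEquiv.addRight v).measurableEmbedding
      rw [hmp'.setIntegral_image_emb hemb',
        integral_add hint (integrableOn_const hKc.measure_lt_top.ne),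
        setIntegral_const]
      rfl
    have heq : ξ • I = I + c • v := by rw [← ha, hv, hb]
    have key : ξ • x₀ - x₀ = v := by
      rw [hx₀, smul_comm, ← smul_sub]
      have hd : ξ • I - I = c • v := by rw [heq]; abel
      rw [hd, smul_smul, inv_mul_cancel₀ hcpos.ne', one_smul]
    -- conclude
    rw [← Set.image_smul, Set.image_image]
    have h2 : (fun x => ξ • (x - x₀)) '' K = (fun y => y - ξ • x₀) '' (ξ • K) := by
      rw [← Set.image_smul, Set.image_image]
      have hf : (fun x : EuclideanSpace ℂ (Fin n) => ξ • x - ξ • x₀)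
          = fun x => ξ • (x - x₀) := by
        funext x; rw [smul_sub]
      rw [hf]
    rw [h2, hv, Set.image_image]
    have hf : (fun x : EuclideanSpace ℂ (Fin n) => x + v - ξ • x₀)
        = fun x => x - x₀ := by
      funext x; rw [← key]; abel
    rw [hf]
end

section
/- A convex body K ⊂ ℂⁿ is complex symmetric if and only if some translate K' of K has the property that for every complex 1-dimensional linear subspace L of ℂⁿ, the orthogonal projection of K' onto L is a closed disk centered at the origin. -/
open Pointwise FiniteDimensional

private lemma re_inner_eq' {n : ℕ} (x y : EuclideanSpace ℂ (Fin n)) :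
    (inner ℝ x y : ℝ) = Complex.re (inner ℂ x y : ℂ) := by
  simp [PiLp.inner_apply, Complex.inner, map_sum, Complex.mul_re]

/-- A rotation-invariant nonempty compact convex subset of a 1-dimensional complex
subspace is a closed ball centered at the origin. -/
private lemma ball_of_rot' {n : ℕ} (L : Submodule ℂ (EuclideanSpace ℂ (Fin n)))
    (h1 : Module.finrank ℂ L = 1) (T : Set L) (hTc : IsCompact T) (hTconv : Convex ℝ T)
    (hTne : T.Nonempty) (hrot : ∀ ξ : ℂ, ‖ξ‖ = 1 → ξ • T = T) :
    ∃ r : ℝ, 0 ≤ r ∧ T = Metric.closedBall 0 r := by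
  obtain ⟨m, hmT, hmax⟩ := hTc.exists_isMaxOn hTne continuous_norm.continuousOn
  refine ⟨‖m‖, norm_nonneg _, ?_⟩
  have hneg : ∀ x ∈ T, -x ∈ T := by
    intro x hx
    have h := hrot (-1) (by simp)
    rw [← h]
    exact ⟨x, hx, by simp⟩
  have h0 : (0 : L) ∈ T := by
    have := hTconv hmT (hneg m hmT) (le_of_lt one_half_pos) (le_of_lt one_half_pos) (by norm_num)
    simpa using this
  ext z
  simp only [Metric.mem_closedBall, dist_zero_right]
  constructor
  · intro hz; exact hmax hz
  · intro hz
    by_cases hm : m = 0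
    · have hz0 : z = 0 := by
        rw [hm, norm_zero] at hz
        exact norm_le_zero_iff.mp hz
      rw [hz0]; exact h0
    · have hspan : (ℂ ∙ m) = (⊤ : Submodule ℂ L) := by
        apply Submodule.eq_top_of_finrank_eq
        rw [finrank_span_singleton hm]
        exact h1.symm
      obtain ⟨c, hc⟩ : ∃ c : ℂ, c • m = z :=
        Submodule.mem_span_singleton.mp (hspan ▸ Submodule.mem_top)
      by_cases hc0 : c = 0
      · rw [← hc, hc0, zero_smul]; exact h0
      · set ξ : ℂ := (‖c‖ : ℂ)⁻¹ * c with hξdef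
        have hcnorm : (0:ℝ) < ‖c‖ := norm_pos_iff.mpr hc0
        have hξ : ‖ξ‖ = 1 := by
          rw [hξdef, norm_mul, norm_inv, Complex.norm_real, norm_norm]
          field_simp
        have hξm : ξ • m ∈ T := by
          rw [← hrot ξ hξ]; exact ⟨m, hmT, rfl⟩
        have hmpos : (0:ℝ) < ‖m‖ := norm_pos_iff.mpr hm
        have hcle : ‖c‖ ≤ 1 := by
          have hzn : ‖z‖ = ‖c‖ * ‖m‖ := by rw [← hc, norm_smul]
          rw [hzn] at hz
          nlinarith
        have hkey : (‖c‖ : ℝ) • (ξ • m) + (1 - ‖c‖) • (0 : L) = z := by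
          rw [smul_zero, add_zero, ← Complex.coe_smul, smul_smul, hξdef]
          rw [show (‖c‖ : ℂ) * ((‖c‖ : ℂ)⁻¹ * c) = c by
            rw [← mul_assoc, mul_inv_cancel₀ (Complex.ofReal_ne_zero.mpr (ne_of_gt hcnorm)),
              one_mul]]
          exact hc
        rw [← hkey]
        exact hTconv hξm h0 (norm_nonneg c) (by linarith) (by ring)

/-- A convex body `K ⊂ ℂⁿ` is complex symmetric iff some translate `K'` of `K`
projects orthogonally onto every complex line through the origin as a closed
disk centered at the origin. -/
theorem complex_symmetric_iff_projections_disks (n : ℕ)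
    (K : Set (EuclideanSpace ℂ (Fin n)))
    (hKc : IsCompact K) (hKconv : Convex ℝ K) (hKint : (interior K).Nonempty) :
    (∃ x₀ : EuclideanSpace ℂ (Fin n), ∀ ξ : ℂ, ‖ξ‖ = 1 →
        ξ • ((fun x => x - x₀) '' K) = (fun x => x - x₀) '' K) ↔
    (∃ v : EuclideanSpace ℂ (Fin n),
      ∀ L : Submodule ℂ (EuclideanSpace ℂ (Fin n)), Module.finrank ℂ L = 1 →
        ∃ r : ℝ, 0 ≤ r ∧
          (Submodule.orthogonalProjectionOnto L) '' ((fun x => x + v) '' K) =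
            Metric.closedBall (0 : L) r) := by
  have hKne : K.Nonempty := hKint.mono interior_subset
  constructor
  · rintro ⟨x₀, hsym⟩
    refine ⟨-x₀, ?_⟩
    intro L hL
    have himg : (fun x : EuclideanSpace ℂ (Fin n) => x + -x₀) '' K
        = (fun x => x - x₀) '' K := by
      simp only [← sub_eq_add_neg]
    rw [himg]
    set S := (fun x : EuclideanSpace ℂ (Fin n) => x - x₀) '' K with hS
    set P := Submodule.orthogonalProjectionOnto L with hP
    have hScont : Continuous (fun x : EuclideanSpace ℂ (Fin n) => x - x₀) :=
      continuous_id.sub continuous_const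
    have hSc : IsCompact S := hKc.image hScont
    have hSconv : Convex ℝ S := by
      rw [hS, show (fun x : EuclideanSpace ℂ (Fin n) => x - x₀) = (fun x => -x₀ + x) from
        funext fun x => by rw [sub_eq_neg_add]]
      exact hKconv.translate (-x₀)
    have hSne : S.Nonempty := hKne.image _
    have hTc : IsCompact (P '' S) := hSc.image P.continuous
    have hTconv : Convex ℝ (P '' S) := by
      have := hSconv.linear_image ((P.restrictScalars ℝ).toLinearMap)
      simpa using this
    have hTne : (P '' S).Nonempty := hSne.image _
    have hrot : ∀ ξ : ℂ, ‖ξ‖ = 1 → ξ • (P '' S) = P '' S := by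
      intro ξ hξ
      calc ξ • (P '' S) = P '' (ξ • S) := (image_smul_setₛₗ (σ := RingHom.id ℂ) P ξ S).symm
        _ = P '' S := by rw [hsym ξ hξ]
    obtain ⟨r, hr, hT⟩ := ball_of_rot' L hL (P '' S) hTc hTconv hTne hrot
    exact ⟨r, hr, hT⟩
  · rintro ⟨v, hproj⟩
    refine ⟨-v, ?_⟩
    have himg : (fun x : EuclideanSpace ℂ (Fin n) => x - -v) '' K
        = (fun x => x + v) '' K := by
      simp only [sub_neg_eq_add]
    set K' := (fun x : EuclideanSpace ℂ (Fin n) => x + v) '' K with hK'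
    have hK'c : IsCompact K' := hKc.image (continuous_id.add continuous_const)
    have hK'conv : Convex ℝ K' := by
      rw [hK', show (fun x : EuclideanSpace ℂ (Fin n) => x + v) = (fun x => v + x) from
        funext fun x => by rw [add_comm]]
      exact hKconv.translate v
    have hK'ne : K'.Nonempty := hKne.image _
    have hsub : ∀ ξ : ℂ, ‖ξ‖ = 1 → ξ • K' ⊆ K' := by
      intro ξ hξ z hzmem
      obtain ⟨y, hy, rfl⟩ := hzmem
      by_contra hz
      obtain ⟨f, c, hfc, hcf⟩ :=
        geometric_hahn_banach_closed_point hK'conv hK'c.isClosed hz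
      set u := (InnerProductSpace.toDual ℝ (EuclideanSpace ℂ (Fin n))).symm f with hu
      have hfu : ∀ x : EuclideanSpace ℂ (Fin n), f x = Complex.re (inner ℂ x u : ℂ) := by
        intro x
        rw [← re_inner_eq', real_inner_comm, hu, InnerProductSpace.toDual_symm_apply]
      have hu0 : u ≠ 0 := by
        intro h
        have h1 := hfc y hy
        rw [hfu] at h1 hcf
        rw [h] at h1 hcf
        simp only [inner_zero_right, Complex.zero_re] at h1 hcf
        linarith
      obtain ⟨r, hr0, hr⟩ := hproj (Submodule.span ℂ {u}) (finrank_span_singleton hu0)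
      set P := Submodule.orthogonalProjectionOnto (Submodule.span ℂ {u}) with hPdef
      have hPy : P y ∈ Metric.closedBall (0 : ↥(Submodule.span ℂ {u})) r := by
        rw [← hr]; exact ⟨y, hy, rfl⟩
      have hPz : P (ξ • y) ∈ Metric.closedBall (0 : ↥(Submodule.span ℂ {u})) r := by
        rw [map_smul, mem_closedBall_zero_iff, norm_smul, hξ, one_mul]
        rwa [mem_closedBall_zero_iff] at hPy
      rw [← hr] at hPz
      obtain ⟨a, ha, hPa⟩ := hPz
      have hkey : ∀ x : EuclideanSpace ℂ (Fin n),
          Complex.re (inner ℂ x u : ℂ) = Complex.re (inner ℂ ((P x : EuclideanSpace ℂ (Fin n))) u : ℂ) := by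
        intro x
        have h := Submodule.starProjection_inner_eq_zero x u (Submodule.mem_span_singleton_self u : u ∈ Submodule.span ℂ {u})
        rw [Submodule.starProjection_apply, inner_sub_left, sub_eq_zero] at h
        rw [h]
      have hfa : f a = f (ξ • y) := by
        rw [hfu, hfu, hkey a, hkey (ξ • y), hPa]
      have h1 := hfc a ha
      rw [hfa] at h1
      linarith
    intro ξ hξ
    rw [himg]
    apply Set.Subset.antisymm (hsub ξ hξ)
    have hξ0 : ξ ≠ 0 := by
      intro h; rw [h, norm_zero] at hξ; norm_num at hξ
    have hinv : ‖ξ⁻¹‖ = 1 := by rw [norm_inv, hξ]; norm_num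
    have h2 := Set.smul_set_mono (a := ξ) (hsub ξ⁻¹ hinv)
    rwa [smul_smul, mul_inv_cancel₀ hξ0, one_smul] at h2
end

section
/- Let K ⊂ ℂ² be a convex body contained in the closed unit ball B of ℂ², and suppose that for every complex line L (1-dimensional complex affine subspace), the intersection L ∩ K is either empty, a point, or a disk (the image of a closed round disk under a complex affine map ℂ → L). If x, y are two distinct points of K lying on the unit sphere S³ = ∂B, and L is the complex line through x and y, then L ∩ K = L ∩ B, and in particular L ∩ S³ ⊂ K. -/
/-- A complex line in a complex vector space. -/
def IsComplexLine {V : Type*} [AddCommGroup V] [Module ℂ V] (L : Set V) : Prop :=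
  ∃ a b : V, b ≠ 0 ∧ L = {x | ∃ t : ℂ, x = a + t • b}

/-- A disk: image of a closed round disk under a complex affine map `ℂ → V`. -/
def IsComplexDisk {V : Type*} [AddCommGroup V] [Module ℂ V] (S : Set V) : Prop :=
  ∃ (a b : V) (r : ℝ), 0 < r ∧ b ≠ 0 ∧
    S = (fun t : ℂ => a + t • b) '' Metric.closedBall (0 : ℂ) r

open Metric

private lemma disk_touch {c tx ty : ℂ} {ρ R : ℝ} (hρ : 0 < ρ)
    (hsub : closedBall c ρ ⊆ closedBall 0 R)
    (htx : tx ∈ closedBall c ρ) (hty : ty ∈ closedBall c ρ)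
    (hxR : ‖tx‖ = R) (hyR : ‖ty‖ = R) (hne : tx ≠ ty) :
    closedBall c ρ = closedBall 0 R := by
  have hc : c = 0 := by
    by_contra hc
    have hcn : (0:ℝ) < ‖c‖ := norm_pos_iff.mpr hc
    have hw : (1 + ρ / ‖c‖) • c ∈ closedBall c ρ := by
      rw [mem_closedBall, dist_eq_norm]
      have : (1 + ρ / ‖c‖) • c - c = (ρ / ‖c‖) • c := by
        rw [add_smul, one_smul]; abel
      rw [this, norm_smul, Real.norm_eq_abs, abs_of_pos (by positivity)]
      rw [div_mul_cancel₀ _ hcn.ne']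
    have h1 : ‖c‖ + ρ ≤ R := by
      have := hsub hw
      rw [mem_closedBall, dist_zero_right, norm_smul, Real.norm_eq_abs,
        abs_of_pos (by positivity)] at this
      calc ‖c‖ + ρ = (1 + ρ / ‖c‖) * ‖c‖ := by
            rw [add_mul, one_mul, div_mul_cancel₀ _ hcn.ne']
        _ ≤ R := this
    have key : ∀ t : ℂ, t ∈ closedBall c ρ → ‖t‖ = R → SameRay ℝ (t - c) c ∧ ‖t - c‖ = ρ := by
      intro t ht htR
      rw [mem_closedBall, dist_eq_norm] at ht
      have h2 : R ≤ ‖t - c‖ + ‖c‖ := by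
        calc R = ‖t - c + c‖ := by rw [sub_add_cancel, htR]
          _ ≤ _ := norm_add_le _ _
      have h3 : ‖t - c‖ = ρ := by linarith
      have h4 : ‖t - c + c‖ = ‖t - c‖ + ‖c‖ := by
        rw [sub_add_cancel, htR]; linarith
      exact ⟨sameRay_iff_norm_add.mpr h4, h3⟩
    obtain ⟨hu, hun⟩ := key tx htx hxR
    obtain ⟨hv, hvn⟩ := key ty hty hyR
    have : tx - c = ty - c :=
      (hu.trans hv.symm (fun h => absurd h hc)).eq_of_norm_eq (by rw [hun, hvn])
    exact hne (by linear_combination (norm := module) this)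
  subst hc
  have h1 : ρ ≤ R := by
    have := hsub (show (ρ:ℂ) ∈ closedBall 0 ρ by
      rw [mem_closedBall, dist_zero_right, Complex.norm_real, Real.norm_eq_abs,
        abs_of_pos hρ])
    rwa [mem_closedBall, dist_zero_right, Complex.norm_real, Real.norm_eq_abs,
      abs_of_pos hρ] at this
  have h2 : R ≤ ρ := by
    rw [mem_closedBall, dist_zero_right, hxR] at htx; exact htx
  rw [le_antisymm h1 h2]

/-- If `K ⊂ ℂ²` is a convex body contained in the closed unit ball whose
complex line sections are empty, a point, or a disk, and `x ≠ y` are points of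
`K` on the unit sphere, then for the complex line `L` through `x` and `y` one
has `L ∩ K = L ∩ B`, and in particular `L ∩ S³ ⊆ K`. -/
theorem bombon_sphere_section (K : Set (EuclideanSpace ℂ (Fin 2)))
    (hKc : IsCompact K) (hKconv : Convex ℝ K) (hKint : (interior K).Nonempty)
    (hKB : K ⊆ Metric.closedBall 0 1)
    (hsec : ∀ L : Set (EuclideanSpace ℂ (Fin 2)), IsComplexLine L →
      (L ∩ K = ∅ ∨ (∃ p, L ∩ K = {p}) ∨ IsComplexDisk (L ∩ K)))
    (x y : EuclideanSpace ℂ (Fin 2)) (hx : x ∈ K) (hy : y ∈ K) (hxy : x ≠ y)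
    (hxS : ‖x‖ = 1) (hyS : ‖y‖ = 1)
    (L : Set (EuclideanSpace ℂ (Fin 2))) (hL : IsComplexLine L)
    (hxL : x ∈ L) (hyL : y ∈ L) :
    L ∩ K = L ∩ Metric.closedBall 0 1 ∧
      L ∩ Metric.sphere 0 1 ⊆ K := by
  obtain ⟨a, b, hb, hLdef⟩ := hL
  have hbn : (0:ℝ) < ‖b‖ := norm_pos_iff.mpr hb
  have hbb : (inner ℂ b b : ℂ) ≠ 0 := inner_self_ne_zero.mpr hb
  set c0 : ℂ := (inner ℂ b a : ℂ) / (inner ℂ b b : ℂ) with hc0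
  set a' : EuclideanSpace ℂ (Fin 2) := a - c0 • b with ha'
  have hinner : (inner ℂ b a' : ℂ) = 0 := by
    rw [ha', inner_sub_right, inner_smul_right, hc0, div_mul_cancel₀ _ hbb, sub_self]
  set f : ℂ → EuclideanSpace ℂ (Fin 2) := fun t => a' + t • b with hf
  have hL' : L = {z | ∃ t : ℂ, z = f t} := by
    rw [hLdef]; ext z
    constructor
    · rintro ⟨t, rfl⟩
      exact ⟨t + c0, by rw [hf]; simp only [ha']; rw [add_smul]; abel⟩
    · rintro ⟨t, rfl⟩
      exact ⟨t - c0, by rw [hf]; simp only [ha']; rw [sub_smul]; abel⟩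
  have hfinj : Function.Injective f := by
    intro s t h
    have h2 : (s - t) • b = 0 := by
      have := h
      simp only [hf] at this
      have h3 : s • b = t • b := by
        have := congrArg (fun z => z - a') this
        simpa using this
      rw [sub_smul, h3, sub_self]
    rcases smul_eq_zero.mp h2 with h4 | h4
    · exact sub_eq_zero.mp h4
    · exact absurd h4 hb
  have hnormsq : ∀ t : ℂ, ‖f t‖^2 = ‖a'‖^2 + ‖t‖^2 * ‖b‖^2 := by
    intro t
    have h1 : (inner ℂ a' (t • b) : ℂ) = 0 := by
      rw [inner_smul_right, inner_eq_zero_symm.mpr hinner, mul_zero]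
    rw [hf]
    simp only []
    rw [@norm_add_sq ℂ, h1, norm_smul]
    simp [mul_pow]
  have hxL2 := hxL
  have hyL2 := hyL
  rw [hL'] at hxL2 hyL2
  obtain ⟨tx, hxt⟩ := hxL2
  obtain ⟨ty, hyt⟩ := hyL2
  have htxy : tx ≠ ty := fun h => hxy (by rw [hxt, hyt, h])
  have hx1 : ‖a'‖^2 + ‖tx‖^2 * ‖b‖^2 = 1 := by
    rw [← hnormsq, ← hxt, hxS]; norm_num
  have hy1 : ‖a'‖^2 + ‖ty‖^2 * ‖b‖^2 = 1 := by
    rw [← hnormsq, ← hyt, hyS]; norm_num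
  set R : ℝ := ‖tx‖ with hR
  have hRy : ‖ty‖ = R := by
    have h2 : ‖ty‖^2 = R^2 :=
      mul_right_cancel₀ (by positivity : ‖b‖^2 ≠ 0)
        (show ‖ty‖^2 * ‖b‖^2 = R^2 * ‖b‖^2 by rw [hR]; linarith)
    exact (pow_left_inj₀ (norm_nonneg _) (norm_nonneg _) two_ne_zero).mp h2
  have htx0 : tx ≠ 0 := by
    intro h0
    apply htxy
    rw [h0]
    symm
    apply norm_eq_zero.mp
    rw [hRy, hR, h0, norm_zero]
  have hRpos : 0 < R := by rw [hR]; exact norm_pos_iff.mpr htx0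
  have hb2 : (0:ℝ) < ‖b‖^2 := by positivity
  have hiff_le : ∀ t : ℂ, ‖f t‖ ≤ 1 ↔ ‖t‖ ≤ R := by
    intro t
    constructor
    · intro h
      have h1 : ‖f t‖^2 ≤ 1^2 :=
        (pow_le_pow_iff_left₀ (norm_nonneg _) zero_le_one two_ne_zero).mpr h
      rw [one_pow, hnormsq] at h1
      have h3 : ‖t‖^2 * ‖b‖^2 ≤ R^2 * ‖b‖^2 := by linarith
      have h2 : ‖t‖^2 ≤ R^2 := le_of_mul_le_mul_right h3 hb2
      exact (pow_le_pow_iff_left₀ (norm_nonneg _) hRpos.le two_ne_zero).mp h2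
    · intro h
      have h2 : ‖t‖^2 ≤ R^2 :=
        (pow_le_pow_iff_left₀ (norm_nonneg _) hRpos.le two_ne_zero).mpr h
      have h1 : ‖f t‖^2 ≤ 1^2 := by
        rw [one_pow, hnormsq]
        have h3 : ‖t‖^2 * ‖b‖^2 ≤ R^2 * ‖b‖^2 :=
          mul_le_mul_of_nonneg_right h2 hb2.le
        linarith
      exact (pow_le_pow_iff_left₀ (norm_nonneg _) zero_le_one two_ne_zero).mp h1
  have hiff_eq : ∀ t : ℂ, ‖f t‖ = 1 ↔ ‖t‖ = R := by
    intro t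
    constructor
    · intro h
      have h1 : ‖f t‖^2 = 1 := by rw [h]; norm_num
      rw [hnormsq] at h1
      have h2 : ‖t‖^2 = R^2 :=
        mul_right_cancel₀ hb2.ne'
          (show ‖t‖^2 * ‖b‖^2 = R^2 * ‖b‖^2 by linarith)
      exact (pow_left_inj₀ (norm_nonneg _) (norm_nonneg _) two_ne_zero).mp h2
    · intro h
      have h1 : ‖f t‖^2 = 1 := by rw [hnormsq, h]; linarith
      exact (pow_left_inj₀ (norm_nonneg _) zero_le_one two_ne_zero).mp (by rw [h1]; norm_num)
  have hLB : L ∩ closedBall 0 1 = f '' closedBall 0 R := by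
    ext z
    simp only [Set.mem_inter_iff, hL', Set.mem_setOf_eq, Set.mem_image,
      mem_closedBall, dist_zero_right]
    constructor
    · rintro ⟨⟨t, rfl⟩, hz⟩
      exact ⟨t, (hiff_le t).mp hz, rfl⟩
    · rintro ⟨t, ht, rfl⟩
      exact ⟨⟨t, rfl⟩, (hiff_le t).mpr ht⟩
  -- the section through x and y must be a disk
  have hLK : IsComplexDisk (L ∩ K) := by
    have hxLK : x ∈ L ∩ K := ⟨hxL, hx⟩
    have hyLK : y ∈ L ∩ K := ⟨hyL, hy⟩
    rcases hsec L ⟨a, b, hb, hLdef⟩ with h | ⟨p, hp⟩ | h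
    · rw [h] at hxLK; exact absurd hxLK (Set.notMem_empty x)
    · exfalso
      rw [hp] at hxLK hyLK
      exact hxy (hxLK.trans hyLK.symm)
    · exact h
  obtain ⟨p, q, r, hr, hq, hdisk⟩ := hLK
  have hp0 : p ∈ L ∩ K := by
    rw [hdisk]
    refine ⟨0, ?_, by simp⟩
    simpa using hr.le
  have hp1 : p + (r:ℂ) • q ∈ L ∩ K := by
    rw [hdisk]
    refine ⟨(r:ℂ), ?_, rfl⟩
    rw [mem_closedBall, dist_zero_right, Complex.norm_real, Real.norm_eq_abs,
      abs_of_pos hr]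
  have hp0L := hp0.1
  have hp1L := hp1.1
  rw [hL'] at hp0L hp1L
  obtain ⟨s₀, hs₀⟩ := hp0L
  obtain ⟨s₁, hs₁⟩ := hp1L
  have hrC : ((r:ℂ)) ≠ 0 := by exact_mod_cast hr.ne'
  set k : ℂ := (s₁ - s₀) / (r:ℂ) with hk
  have hqk : q = k • b := by
    have hs₀' := hs₀
    have hs₁' := hs₁
    simp only [hf] at hs₀' hs₁'
    have h1 : (r:ℂ) • q = (s₁ - s₀) • b := by
      rw [hs₀'] at hs₁'
      linear_combination (norm := module) hs₁'
    have h2 := congrArg (fun z => ((r:ℂ))⁻¹ • z) h1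
    simp only [smul_smul, inv_mul_cancel₀ hrC, one_smul] at h2
    rw [h2, hk, div_eq_inv_mul, mul_smul]
  have hk0 : k ≠ 0 := by
    rw [hk, div_ne_zero_iff]
    refine ⟨sub_ne_zero.mpr ?_, hrC⟩
    intro h
    have h5 : p + (r:ℂ) • q = p := by rw [hs₁, h, ← hs₀]
    have : (r:ℂ) • q = 0 := by
      have h6 := congrArg (fun z => z - p) h5
      simpa using h6
    rcases smul_eq_zero.mp this with h4 | h4
    · exact hrC h4
    · exact hq h4
  have hkn : (0:ℝ) < ‖k‖ := norm_pos_iff.mpr hk0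
  set ρ : ℝ := r * ‖k‖ with hρdef
  have hρpos : 0 < ρ := mul_pos hr hkn
  have hfeq : ∀ t : ℂ, p + t • q = f (s₀ + t * k) := by
    intro t
    rw [hs₀, hqk]
    simp only [hf]
    rw [add_smul, smul_smul]
    abel
  have hKdisk : L ∩ K = f '' closedBall s₀ ρ := by
    rw [hdisk]
    ext z
    simp only [Set.mem_image, mem_closedBall, dist_zero_right, dist_eq_norm, sub_zero]
    constructor
    · rintro ⟨t, ht, rfl⟩
      refine ⟨s₀ + t * k, ?_, (hfeq t).symm⟩
      rw [add_sub_cancel_left, norm_mul, hρdef]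
      exact mul_le_mul_of_nonneg_right ht (norm_nonneg k)
    · rintro ⟨s, hs, rfl⟩
      refine ⟨(s - s₀) / k, ?_, ?_⟩
      · rw [norm_div]
        rw [div_le_iff₀ hkn]
        rw [hρdef] at hs
        linarith [hs]
      · rw [hfeq, div_mul_cancel₀ _ hk0]
        simp only [hf]
        module
  have hsubs : closedBall s₀ ρ ⊆ closedBall (0:ℂ) R := by
    intro s hs
    have h1 : f s ∈ L ∩ K := by rw [hKdisk]; exact ⟨s, hs, rfl⟩
    have h2 : f s ∈ L ∩ closedBall 0 1 := ⟨h1.1, hKB h1.2⟩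
    rw [hLB] at h2
    obtain ⟨t, ht, hft⟩ := h2
    rwa [hfinj hft] at ht
  have htxmem : tx ∈ closedBall s₀ ρ := by
    have h1 : x ∈ f '' closedBall s₀ ρ := by rw [← hKdisk]; exact ⟨hxL, hx⟩
    obtain ⟨t, ht, hft⟩ := h1
    rw [hxt] at hft
    rwa [hfinj hft] at ht
  have htymem : ty ∈ closedBall s₀ ρ := by
    have h1 : y ∈ f '' closedBall s₀ ρ := by rw [← hKdisk]; exact ⟨hyL, hy⟩
    obtain ⟨t, ht, hft⟩ := h1
    rw [hyt] at hft
    rwa [hfinj hft] at ht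
  have hballs : closedBall s₀ ρ = closedBall (0:ℂ) R :=
    disk_touch hρpos hsubs htxmem htymem hR.symm hRy htxy
  have hfinal : L ∩ K = L ∩ closedBall 0 1 := by
    rw [hKdisk, hballs, hLB]
  refine ⟨hfinal, ?_⟩
  intro z hz
  have h1 : z ∈ L ∩ closedBall 0 1 := ⟨hz.1, sphere_subset_closedBall hz.2⟩
  rw [← hfinal] at h1
  exact h1.2
end

section
/- Let A ⊂ S³ be a proper, linearly closed subset of the unit sphere of ℂ² (for distinct x, y ∈ A, the complex-line circle through x and y is contained in A). Then A embeds topologically into ℂ: there is a continuous injective map from A to ℂ. (Explicitly, projection from any point w ∈ S³ \ A along complex lines into the orthogonal complex line is injective on A.) -/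
open scoped ComplexConjugate

/-- A proper linearly closed subset of `S³` embeds topologically in `ℂ`. -/
theorem linearly_closed_subset_embeds_in_C
    (A : Set (EuclideanSpace ℂ (Fin 2)))
    (hAS : A ⊆ Metric.sphere 0 1)
    (hproper : A ≠ Metric.sphere 0 1)
    (hclosed : ∀ x ∈ A, ∀ y ∈ A, x ≠ y →
      ∀ L : Set (EuclideanSpace ℂ (Fin 2)), IsComplexLine L → x ∈ L → y ∈ L →
        L ∩ Metric.sphere 0 1 ⊆ A) :
    ∃ f : A → ℂ, Continuous f ∧ Function.Injective f := by
  obtain ⟨w, hwS, hwA⟩ : ∃ w ∈ Metric.sphere (0 : EuclideanSpace ℂ (Fin 2)) 1, w ∉ A := by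
    by_contra h
    push_neg at h
    exact hproper (le_antisymm hAS h)
  have hwn : ‖w‖ = 1 := by simpa using mem_sphere_zero_iff_norm.mp hwS
  set u : EuclideanSpace ℂ (Fin 2) := WithLp.toLp 2 ![-(conj (w 1)), conj (w 0)] with hu
  have hinner : ∀ x y : EuclideanSpace ℂ (Fin 2),
      (inner ℂ x y : ℂ) = conj (x 0) * y 0 + conj (x 1) * y 1 := by
    intro x y
    simp [PiLp.inner_apply, RCLike.inner_apply, Fin.sum_univ_two, mul_comm]
  have hww : (inner ℂ w w : ℂ) = 1 := (inner_eq_one_iff_of_norm_eq_one hwn hwn).mpr rfl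
  have h1 : conj (w 0) * w 0 + conj (w 1) * w 1 = 1 := by rw [← hinner w w]; exact hww
  have hwu : (inner ℂ w u : ℂ) = 0 := by
    rw [hinner]; simp [hu]; ring
  have hdec : ∀ x : EuclideanSpace ℂ (Fin 2),
      (inner ℂ w x : ℂ) • w + (inner ℂ u x : ℂ) • u = x := by
    intro x
    ext i
    fin_cases i
    · simp only [PiLp.add_apply, PiLp.smul_apply, smul_eq_mul, hinner, hu,
        Matrix.cons_val_zero, Matrix.cons_val_one, Matrix.head_cons, map_neg,
        Complex.conj_conj, Fin.mk_zero, Fin.mk_one, Fin.isValue]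
      linear_combination (x 0) * h1
    · simp only [PiLp.add_apply, PiLp.smul_apply, smul_eq_mul, hinner, hu,
        Matrix.cons_val_zero, Matrix.cons_val_one, Matrix.head_cons, map_neg,
        Complex.conj_conj, Fin.mk_zero, Fin.mk_one, Fin.isValue]
      linear_combination (x 1) * h1
  -- the projection map
  set g : EuclideanSpace ℂ (Fin 2) → ℂ := fun z => (inner ℂ u z : ℂ) / (1 - inner ℂ w z) with hg
  have hd : ∀ z ∈ A, (1 : ℂ) - inner ℂ w z ≠ 0 := by
    intro z hz h
    have hzn : ‖z‖ = 1 := by simpa using mem_sphere_zero_iff_norm.mp (hAS hz)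
    have hz1 : (inner ℂ w z : ℂ) = 1 := (sub_eq_zero.mp h).symm
    have : w = z := (inner_eq_one_iff_of_norm_eq_one hwn hzn).mp hz1
    exact hwA (this ▸ hz)
  -- key representation: every point of A lies on the line through w with direction g z • u - w
  have hline : ∀ z ∈ A, z = w + (1 - (inner ℂ w z : ℂ)) • (g z • u - w) := by
    intro z hz
    have hdz := hd z hz
    have hgu : (1 - (inner ℂ w z : ℂ)) • (g z • u) = (inner ℂ u z : ℂ) • u := by
      rw [smul_smul]
      congr 1
      show (1 - (inner ℂ w z : ℂ)) * ((inner ℂ u z : ℂ) / (1 - inner ℂ w z)) = inner ℂ u z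
      rw [mul_comm]
      exact div_mul_cancel₀ _ hdz
    rw [smul_sub, hgu]
    conv_lhs => rw [← hdec z]
    module
  refine ⟨fun x => g x, ?_, ?_⟩
  · apply Continuous.div
    · exact Continuous.inner continuous_const continuous_subtype_val
    · exact Continuous.sub continuous_const
        (Continuous.inner continuous_const continuous_subtype_val)
    · intro x
      exact hd x x.2
  · intro x y hxy
    by_contra hne
    have hne' : (x : EuclideanSpace ℂ (Fin 2)) ≠ (y : EuclideanSpace ℂ (Fin 2)) :=
      fun h => hne (Subtype.ext h)
    set b : EuclideanSpace ℂ (Fin 2) := g x • u - w with hb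
    have hbne : b ≠ 0 := by
      intro h
      have : (inner ℂ w b : ℂ) = 0 := by rw [h, inner_zero_right]
      rw [hb, inner_sub_right, inner_smul_right, hwu, hww] at this
      simp at this
    set L : Set (EuclideanSpace ℂ (Fin 2)) := {v | ∃ t : ℂ, v = w + t • b} with hL
    have hxL : (x : EuclideanSpace ℂ (Fin 2)) ∈ L := ⟨1 - inner ℂ w (x : EuclideanSpace ℂ (Fin 2)), hline x x.2⟩
    have hyL : (y : EuclideanSpace ℂ (Fin 2)) ∈ L := by
      refine ⟨1 - inner ℂ w (y : EuclideanSpace ℂ (Fin 2)), ?_⟩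
      have hxy' : g (x : EuclideanSpace ℂ (Fin 2)) = g (y : EuclideanSpace ℂ (Fin 2)) := hxy
      have := hline y y.2
      rwa [← hxy'] at this
    have hwL : w ∈ L := ⟨0, by simp⟩
    exact hwA (hclosed x x.2 y y.2 hne' L ⟨w, b, hbne, rfl⟩ hxL hyL ⟨hwL, hwS⟩)
end

section
/- Let K ⊂ ℂⁿ, n ≥ 3, be a complex body of revolution with axis L, hyperplane of revolution H = L^⊥, such that H ∩ K is the unit ball of H. Suppose Γ is a complex hyperplane (through the origin) containing L such that Γ ∩ K equals Γ ∩ B, where B is the unit ball of ℂⁿ. Then K = B. -/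
set_option maxHeartbeats 1000000 in
/-- If `K ⊂ ℂⁿ` (`n ≥ 3`) is a complex body of revolution with axis the complex
line `L` and hyperplane of revolution `H = L^⊥`, whose section with `H` is the
unit ball of `H`, and some complex hyperplane `Γ ⊇ L` satisfies
`Γ ∩ K = Γ ∩ B`, then `K = B` (the unit ball of `ℂⁿ`). -/
theorem body_of_revolution_eq_ball (n : ℕ) (hn : 3 ≤ n)
    (K : Set (EuclideanSpace ℂ (Fin n)))
    (hKc : IsCompact K) (hKconv : Convex ℝ K) (hKint : (interior K).Nonempty)
    (L : Submodule ℂ (EuclideanSpace ℂ (Fin n))) (hL : Module.finrank ℂ L = 1)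
    (hrev : ∀ v : EuclideanSpace ℂ (Fin n), v ∈ L →
      (((fun x => x + v) '' (Lᗮ : Set (EuclideanSpace ℂ (Fin n)))) ∩ K).Nonempty →
      ∃ r : ℝ, 0 ≤ r ∧
        ((fun x => x + v) '' (Lᗮ : Set (EuclideanSpace ℂ (Fin n)))) ∩ K =
          {x ∈ (fun x => x + v) '' (Lᗮ : Set (EuclideanSpace ℂ (Fin n))) | ‖x - v‖ ≤ r})
    (hH : (Lᗮ : Set (EuclideanSpace ℂ (Fin n))) ∩ K =
      (Lᗮ : Set (EuclideanSpace ℂ (Fin n))) ∩ Metric.closedBall 0 1)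
    (Γ : Submodule ℂ (EuclideanSpace ℂ (Fin n))) (hΓ : Module.finrank ℂ Γ = n - 1)
    (hLΓ : L ≤ Γ)
    (hΓK : (Γ : Set (EuclideanSpace ℂ (Fin n))) ∩ K =
      (Γ : Set (EuclideanSpace ℂ (Fin n))) ∩ Metric.closedBall 0 1) :
    K = Metric.closedBall 0 1 := by
  classical
  have hrankE : Module.finrank ℂ (EuclideanSpace ℂ (Fin n)) = n := by
    simp [finrank_euclideanSpace]
  have hLperp : Module.finrank ℂ Lᗮ = n - 1 := by
    have h := Submodule.finrank_add_finrank_orthogonal (K := L)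
    rw [hL, hrankE] at h
    omega
  -- find a unit vector `w ∈ Γ ⊓ Lᗮ`
  obtain ⟨w0, hw0, hw0ne⟩ : ∃ w0 ∈ Γ ⊓ Lᗮ, w0 ≠ 0 := by
    rw [← Submodule.ne_bot_iff]
    intro hbot
    have h1 := Submodule.finrank_sup_add_finrank_inf_eq Γ Lᗮ
    rw [hbot, finrank_bot] at h1
    have h2 : Module.finrank ℂ ↥(Γ ⊔ Lᗮ) ≤ n := by
      have := Submodule.finrank_le (Γ ⊔ Lᗮ)
      rwa [hrankE] at this
    omega
  set w : EuclideanSpace ℂ (Fin n) := ((‖w0‖⁻¹ : ℝ) : ℂ) • w0 with hwdef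
  have hwnorm : ‖w‖ = 1 := by
    rw [hwdef, norm_smul, Complex.norm_real, Real.norm_eq_abs,
      abs_of_nonneg (inv_nonneg.mpr (norm_nonneg w0)),
      inv_mul_cancel₀ (norm_ne_zero_iff.mpr hw0ne)]
  have hwΓ : w ∈ Γ := Submodule.smul_mem _ _ hw0.1
  have hwLp : w ∈ Lᗮ := Submodule.smul_mem _ _ hw0.2
  -- Pythagoras
  have pyth : ∀ v y : EuclideanSpace ℂ (Fin n), v ∈ L → y ∈ Lᗮ →
      ‖v + y‖ ^ 2 = ‖v‖ ^ 2 + ‖y‖ ^ 2 := by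
    intro v y hv hy
    have hinner : (inner ℂ v y : ℂ) = 0 := hy v hv
    rw [norm_add_sq (𝕜 := ℂ), hinner]
    simp
  -- norm of `v + t • w`
  have hnw : ∀ (v : EuclideanSpace ℂ (Fin n)) (t : ℝ), v ∈ L → 0 ≤ t →
      ‖v + (t : ℂ) • w‖ ^ 2 = ‖v‖ ^ 2 + t ^ 2 := by
    intro v t hv ht
    rw [pyth v _ hv (Submodule.smul_mem _ _ hwLp), norm_smul, Complex.norm_real, Real.norm_eq_abs,
      abs_of_nonneg ht, hwnorm, mul_one]
  -- membership in a translated plane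
  have memplane : ∀ v z : EuclideanSpace ℂ (Fin n),
      z ∈ (fun x => x + v) '' (Lᗮ : Set (EuclideanSpace ℂ (Fin n))) ↔ z - v ∈ Lᗮ := by
    intro v z
    constructor
    · rintro ⟨y, hy, rfl⟩; simpa using hy
    · intro h; exact ⟨z - v, h, sub_add_cancel z v⟩
  ext x
  set v : EuclideanSpace ℂ (Fin n) := (Submodule.orthogonalProjectionOnto L x : EuclideanSpace ℂ (Fin n))
    with hvdef
  have hvL : v ∈ L := (Submodule.orthogonalProjectionOnto L x).2
  have hyL : x - v ∈ Lᗮ := Submodule.sub_starProjection_mem_orthogonal (K := L) x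
  have hxdec : x = v + (x - v) := by abel
  have hvΓ : v ∈ Γ := hLΓ hvL
  have hxplane : x ∈ (fun z => z + v) '' (Lᗮ : Set (EuclideanSpace ℂ (Fin n))) :=
    (memplane v x).mpr hyL
  have hxsq : ‖x‖ ^ 2 = ‖v‖ ^ 2 + ‖x - v‖ ^ 2 := by
    conv_lhs => rw [hxdec]
    exact pyth v (x - v) hvL hyL
  simp only [Metric.mem_closedBall, dist_zero_right]
  constructor
  · -- `x ∈ K → ‖x‖ ≤ 1`
    intro hxK
    obtain ⟨r, hr0, heq⟩ := hrev v hvL ⟨x, hxplane, hxK⟩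
    have hxr : ‖x - v‖ ≤ r := by
      have hmem : x ∈ {z ∈ (fun z => z + v) '' (Lᗮ : Set (EuclideanSpace ℂ (Fin n))) |
          ‖z - v‖ ≤ r} := heq ▸ ⟨hxplane, hxK⟩
      exact hmem.2
    set p : EuclideanSpace ℂ (Fin n) := v + (r : ℂ) • w with hpdef
    have hpplane : p ∈ (fun z => z + v) '' (Lᗮ : Set (EuclideanSpace ℂ (Fin n))) := by
      rw [memplane]
      simpa [hpdef, add_sub_cancel_left] using Submodule.smul_mem Lᗮ ((r : ℂ)) hwLp
    have hpnorm : ‖p - v‖ ≤ r := by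
      rw [hpdef, add_sub_cancel_left, norm_smul, Complex.norm_real, Real.norm_eq_abs, abs_of_nonneg hr0,
        hwnorm, mul_one]
    have hpK : p ∈ K := by
      have : p ∈ ((fun z => z + v) '' (Lᗮ : Set (EuclideanSpace ℂ (Fin n)))) ∩ K := by
        rw [heq]; exact ⟨hpplane, hpnorm⟩
      exact this.2
    have hpB : ‖p‖ ≤ 1 := by
      have hmem : p ∈ (Γ : Set (EuclideanSpace ℂ (Fin n))) ∩ Metric.closedBall 0 1 := by
        rw [← hΓK]
        exact ⟨Submodule.add_mem Γ hvΓ (Submodule.smul_mem _ _ hwΓ), hpK⟩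
      simpa using hmem.2
    have hpsq : ‖p‖ ^ 2 = ‖v‖ ^ 2 + r ^ 2 := hnw v r hvL hr0
    nlinarith [norm_nonneg x, norm_nonneg p, norm_nonneg (x - v), norm_nonneg v]
  · -- `‖x‖ ≤ 1 → x ∈ K`
    intro hx1
    have hv1 : ‖v‖ ≤ 1 := by nlinarith [norm_nonneg x, norm_nonneg (x - v), norm_nonneg v]
    have hvK : v ∈ K := by
      have hmem : v ∈ (Γ : Set (EuclideanSpace ℂ (Fin n))) ∩ K := by
        rw [hΓK]
        exact ⟨hvΓ, by simpa using hv1⟩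
      exact hmem.2
    have hvplane : v ∈ (fun z => z + v) '' (Lᗮ : Set (EuclideanSpace ℂ (Fin n))) := by
      rw [memplane]; simpa using Submodule.zero_mem Lᗮ
    obtain ⟨r, hr0, heq⟩ := hrev v hvL ⟨v, hvplane, hvK⟩
    set t : ℝ := Real.sqrt (1 - ‖v‖ ^ 2) with htdef
    have ht0 : 0 ≤ t := Real.sqrt_nonneg _
    have ht2 : t ^ 2 = 1 - ‖v‖ ^ 2 := Real.sq_sqrt (by nlinarith [norm_nonneg v])
    set q : EuclideanSpace ℂ (Fin n) := v + (t : ℂ) • w with hqdef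
    have hqsq : ‖q‖ ^ 2 = 1 := by rw [hqdef, hnw v t hvL ht0, ht2]; ring
    have hqK : q ∈ K := by
      have hmem : q ∈ (Γ : Set (EuclideanSpace ℂ (Fin n))) ∩ K := by
        rw [hΓK]
        refine ⟨Submodule.add_mem Γ hvΓ (Submodule.smul_mem _ _ hwΓ), ?_⟩
        simp only [Metric.mem_closedBall, dist_zero_right]
        nlinarith [norm_nonneg q]
      exact hmem.2
    have hqplane : q ∈ (fun z => z + v) '' (Lᗮ : Set (EuclideanSpace ℂ (Fin n))) := by
      rw [memplane]
      simpa [hqdef, add_sub_cancel_left] using Submodule.smul_mem Lᗮ ((t : ℂ)) hwLp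
    have htr : t ≤ r := by
      have hmem : q ∈ {z ∈ (fun z => z + v) '' (Lᗮ : Set (EuclideanSpace ℂ (Fin n))) |
          ‖z - v‖ ≤ r} := heq ▸ ⟨hqplane, hqK⟩
      have := hmem.2
      rwa [hqdef, add_sub_cancel_left, norm_smul, Complex.norm_real, Real.norm_eq_abs, abs_of_nonneg ht0,
        hwnorm, mul_one] at this
    have hxt : ‖x - v‖ ≤ t := by nlinarith [norm_nonneg (x - v), norm_nonneg v, norm_nonneg x]
    have : x ∈ ((fun z => z + v) '' (Lᗮ : Set (EuclideanSpace ℂ (Fin n)))) ∩ K := by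
      rw [heq]
      exact ⟨hxplane, le_trans hxt htr⟩
    exact this.2
end
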